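/- Let G = (V, E) be an edge-labeled DAG with labels c : E → ℝ, with set of sources X and set of sinks Y. Eliminate all intermediate vertices one after another, in an arbitrary order, by vertex elimination (each elimination applied to the current graph). The resulting graph G' is bipartite: every edge of G' goes from a vertex of X to a vertex of Y, and for every source s ∈ X and sink t ∈ Y the label of the edge (s,t) in G' (taken to be 0 if the edge is absent) equals the original path sum J_G(s, t). -/

import Mathlib

open scoped Classical
set_option linter.unusedSectionVars false

/-- A path from `s` to `t`: a nonempty sequence of consecutive edges, recorded as the
list of its vertices (at least two of them, consecutive ones related by `R`). -/
def IsPath {α : Type*} (R : α → α → Prop) (s t : α) (p : List α) : Prop :=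
  2 ≤ p.length ∧ p.Chain' R ∧ p.head? = some s ∧ p.getLast? = some t

/-- The path sum `J_G(s,t)`: the sum over all paths from `s` to `t` of the product of
the edge labels along the path (an empty sum is `0`). -/
noncomputable def pathSum {α : Type*} (R : α → α → Prop) (c : α → α → ℝ) (s t : α) : ℝ :=
  ∑' p : {p : List α // IsPath R s t p},
    ((p.1.zip p.1.tail).map (fun e => c e.1 e.2)).prod

/-- Adjacency after vertex elimination of `j`: the vertex `j` is isolated (removed),
all other edges are kept, and for every predecessor `i` and successor `k` of `j`
the (possibly fill) edge `(i,k)` is present. -/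
def elimAdj {V : Type*} [DecidableEq V] (A : V → V → Bool) (j : V) : V → V → Bool :=
  fun x y => !decide (x = j) && !decide (y = j) && (A x y || (A x j && A j y))

/-- Labels after vertex elimination of `j`: for a predecessor `i` and successor `k`
of `j` the label of `(i,k)` becomes `c i k + c j k * c i j` if `(i,k)` was an edge,
and `c j k * c i j` for a fill edge; all other edges keep their labels. -/
noncomputable def elimLab {V : Type*} [DecidableEq V] (A : V → V → Bool)
    (c : V → V → ℝ) (j : V) : V → V → ℝ :=
  fun x y =>
    if A x j ∧ A j y then
      (if A x y then c x y + c j y * c x j else c j y * c x j)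
    else c x y

section Dev
variable {V : Type*} [Fintype V] [DecidableEq V]

noncomputable def Wm (A : V → V → Bool) (c : V → V → ℝ) : Matrix V V ℝ :=
  Matrix.of fun x y => if A x y then c x y else 0

lemma Wm_apply (A : V → V → Bool) (c : V → V → ℝ) (x y : V) :
    Wm A c x y = if A x y then c x y else 0 := rfl


lemma Wm_entry {A : V → V → Bool} {c : V → V → ℝ} {x y : V} (h : Wm A c x y ≠ 0) :
    A x y = true := by
  by_contra hb
  rw [Bool.not_eq_true] at hb
  exact h (by simp [Wm_apply, hb])

lemma pow_support (f : V → ℕ) (W : Matrix V V ℝ) (h : ∀ i j, W i j ≠ 0 → f i < f j) :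
    ∀ n x y, (W ^ n) x y ≠ 0 → f x + n ≤ f y := by
  intro n
  induction n with
  | zero =>
    intro x y h0
    rw [pow_zero] at h0
    have hxy : x = y := by
      by_contra hxy
      exact h0 (by simp [Matrix.one_apply, hxy])
    subst hxy; simp
  | succ n ih =>
    intro x y h0
    rw [pow_succ', Matrix.mul_apply] at h0
    obtain ⟨z, -, hz⟩ := Finset.exists_ne_zero_of_sum_ne_zero h0
    have h1 : W x z ≠ 0 := fun hc => hz (by simp [hc])
    have h2 : (W ^ n) z y ≠ 0 := fun hc => hz (by simp [hc])
    have := h _ _ h1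
    have := ih z y h2
    omega

lemma pow_vanish (f : V → ℕ) (W : Matrix V V ℝ) (h : ∀ i j, W i j ≠ 0 → f i < f j)
    (n : ℕ) (hn : ∀ y, f y < n) : W ^ n = 0 := by
  ext x y
  by_contra h0
  have := pow_support f W h n x y h0
  have := hn y
  omega

lemma inv_one_sub (W : Matrix V V ℝ) (n : ℕ) (hn : W ^ n = 0) :
    (1 - W) * (∑ k ∈ Finset.range n, W ^ k) = 1 := by
  have h := mul_geom_sum W n
  rw [hn] at h
  have h2 : (1 - W) = -(W - 1) := by noncomm_ring
  rw [h2, neg_mul, h]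
  noncomm_ring

noncomputable def Pj (j : V) : Matrix V V ℝ :=
  Matrix.of fun x y => if x = j ∧ y = j then 1 else 0

lemma Pj_mul_apply (j : V) (M : Matrix V V ℝ) (x y : V) :
    (Pj j * M) x y = if x = j then M j y else 0 := by
  rw [Matrix.mul_apply]
  by_cases hx : x = j
  · rw [if_pos hx]
    rw [Finset.sum_eq_single j]
    · simp [Pj, hx]
    · intro z _ hz; simp [Pj, hz]
    · intro h; exact absurd (Finset.mem_univ j) h
  · rw [if_neg hx]
    apply Finset.sum_eq_zero
    intro z _
    simp [Pj, hx]

lemma mul_Pj_apply (j : V) (M : Matrix V V ℝ) (x y : V) :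
    (M * Pj j) x y = if y = j then M x j else 0 := by
  rw [Matrix.mul_apply]
  by_cases hy : y = j
  · rw [if_pos hy]
    rw [Finset.sum_eq_single j]
    · simp [Pj, hy]
    · intro z _ hz; simp [Pj, hz]
    · intro h; exact absurd (Finset.mem_univ j) h
  · rw [if_neg hy]
    apply Finset.sum_eq_zero
    intro z _
    simp [Pj, hy]

lemma mul_Pj_mul_apply (j : V) (M M' : Matrix V V ℝ) (x y : V) :
    (M * Pj j * M') x y = M x j * M' j y := by
  rw [Matrix.mul_apply]
  rw [Finset.sum_eq_single j]
  · rw [mul_Pj_apply, if_pos rfl]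
  · intro z _ hz; rw [mul_Pj_apply, if_neg hz, zero_mul]
  · intro h; exact absurd (Finset.mem_univ j) h

lemma Pj_idem (j : V) : Pj j * Pj j = Pj j := by
  ext x y
  rw [Pj_mul_apply]
  by_cases hx : x = j <;> simp [Pj, hx]

end Dev

section Dev2
variable {V : Type*} [Fintype V] [DecidableEq V]

lemma Wm_elim_eq (A : V → V → Bool) (c : V → V → ℝ) (j : V) (hjj : A j j = false) :
    Wm (elimAdj A j) (elimLab A c j)
      = Wm A c - Pj j * Wm A c - Wm A c * Pj j + Wm A c * Pj j * Wm A c := by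
  ext x y
  simp only [Matrix.sub_apply, Matrix.add_apply]
  rw [Pj_mul_apply, mul_Pj_apply, mul_Pj_mul_apply]
  by_cases hx : x = j
  · by_cases hy : y = j
    · simp [Wm_apply, elimAdj, hjj, hx, hy]
    · simp [Wm_apply, elimAdj, hjj, hx, hy]
  · by_cases hy : y = j
    · simp [Wm_apply, elimAdj, hjj, hx, hy]
    · rw [if_neg hx, if_neg hy]
      cases hxy : A x y <;> cases hxj : A x j <;> cases hjy : A j y <;>
        simp [Wm_apply, elimAdj, elimLab, hx, hy, hxy, hxj, hjy] <;> ring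

lemma step_inv (f : V → ℕ) (A : V → V → Bool) (c : V → V → ℝ)
    (h : ∀ i k, A i k = true → f i < f k) (j : V) {x y : V} (hx : x ≠ j) (hy : y ≠ j) :
    (1 - Wm (elimAdj A j) (elimLab A c j))⁻¹ x y = (1 - Wm A c)⁻¹ x y := by
  set W : Matrix V V ℝ := Wm A c with hW
  set P : Matrix V V ℝ := Pj j with hP
  have hjj : A j j = false := by
    cases hjj : A j j
    · rfl
    · exact absurd (h j j hjj) (lt_irrefl _)
  have hWjj : W j j = 0 := by simp [hW, Wm_apply, hjj]
  have hPWP : P * W * P = 0 := by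
    ext a b
    rw [hP, mul_Pj_apply]
    by_cases hb : b = j
    · rw [if_pos hb, Pj_mul_apply]
      by_cases ha : a = j
      · rw [if_pos ha, hWjj]; simp
      · rw [if_neg ha]; simp
    · rw [if_neg hb]; simp
  have hW' : Wm (elimAdj A j) (elimLab A c j) = W - P * W - W * P + W * P * W :=
    Wm_elim_eq A c j hjj
  have hPP : P * P = P := Pj_idem j
  have hfact : (1 : Matrix V V ℝ) - Wm (elimAdj A j) (elimLab A c j)
      = (1 + W * P) * (1 - W) * (1 + P * W) := by
    rw [hW']
    have hexp : (1 + W * P) * (1 - W) * (1 + P * W)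
        = 1 + P * W + W * P + W * (P * P) * W - W - W * P * W - W * P * W
            - W * (P * W * P) * W := by noncomm_ring
    rw [hexp, hPP, hPWP]
    noncomm_ring
  set n : ℕ := Finset.univ.sup f + 1 with hn
  have hWn : W ^ n = 0 := by
    apply pow_vanish f
    · intro i k hik
      have := Wm_entry hik
      exact h i k this
    · intro z
      have : f z ≤ Finset.univ.sup f := Finset.le_sup (Finset.mem_univ z)
      omega
  set S : Matrix V V ℝ := ∑ k ∈ Finset.range n, W ^ k with hS
  have hMS : (1 - W) * S = 1 := inv_one_sub W n hWn
  have hA1 : ((1 : Matrix V V ℝ) + P * W) * (1 - P * W) = 1 := by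
    calc ((1 : Matrix V V ℝ) + P * W) * (1 - P * W)
        = 1 - (P * W * P) * W := by noncomm_ring
      _ = 1 := by rw [hPWP]; noncomm_ring
  have hB1 : ((1 : Matrix V V ℝ) + W * P) * (1 - W * P) = 1 := by
    calc ((1 : Matrix V V ℝ) + W * P) * (1 - W * P)
        = 1 - W * (P * W * P) := by noncomm_ring
      _ = 1 := by rw [hPWP]; noncomm_ring
  have hK : (1 - Wm (elimAdj A j) (elimLab A c j)) * ((1 - P * W) * S * (1 - W * P)) = 1 := by
    calc (1 - Wm (elimAdj A j) (elimLab A c j)) * ((1 - P * W) * S * (1 - W * P))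
        = (1 + W * P) * ((1 - W) * ((((1 : Matrix V V ℝ) + P * W) * (1 - P * W))
            * (S * (1 - W * P)))) := by rw [hfact]; noncomm_ring
      _ = (1 + W * P) * (((1 - W) * S) * (1 - W * P)) := by rw [hA1]; noncomm_ring
      _ = ((1 : Matrix V V ℝ) + W * P) * (1 - W * P) := by rw [hMS]; noncomm_ring
      _ = 1 := hB1
  rw [Matrix.inv_eq_right_inv hK, Matrix.inv_eq_right_inv hMS]
  have expand : (1 - P * W) * S * (1 - W * P)
      = S - P * (W * S) - (S * W) * P + P * (W * S * W * P) := by noncomm_ring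
  rw [expand]
  simp only [Matrix.sub_apply, Matrix.add_apply, hP, Pj_mul_apply, mul_Pj_apply,
    if_neg hx, if_neg hy]
  ring

end Dev2

section Dev3
variable {V : Type*} [Fintype V] [DecidableEq V]

noncomputable def elimStep : ((V → V → Bool) × (V → V → ℝ)) → V → ((V → V → Bool) × (V → V → ℝ)) :=
  fun p j => (elimAdj p.1 j, elimLab p.1 p.2 j)

lemma elimAdj_true_iff (A : V → V → Bool) (j x y : V) :
    elimAdj A j x y = true ↔ (x ≠ j ∧ y ≠ j) ∧ (A x y = true ∨ (A x j = true ∧ A j y = true)) := by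
  simp [elimAdj, and_assoc]

lemma elim_mono (f : V → ℕ) (A : V → V → Bool) (j : V)
    (h : ∀ i k, A i k = true → f i < f k) :
    ∀ i k, elimAdj A j i k = true → f i < f k := by
  intro i k hik
  rw [elimAdj_true_iff] at hik
  rcases hik.2 with h1 | ⟨h1, h2⟩
  · exact h _ _ h1
  · exact lt_trans (h _ _ h1) (h _ _ h2)

lemma fold_mono (f : V → ℕ) :
    ∀ (L : List V) (A : V → V → Bool) (c : V → V → ℝ),
      (∀ i k, A i k = true → f i < f k) →
      ∀ i k, (L.foldl elimStep (A, c)).1 i k = true → f i < f k := by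
  intro L
  induction L with
  | nil => intro A c h; exact h
  | cons j rest ih =>
    intro A c h
    have hstep : (j :: rest).foldl elimStep (A, c)
        = rest.foldl elimStep (elimAdj A j, elimLab A c j) := rfl
    rw [hstep]
    exact ih (elimAdj A j) (elimLab A c j) (elim_mono f A j h)

lemma fold_jac (f : V → ℕ) :
    ∀ (L : List V) (A : V → V → Bool) (c : V → V → ℝ),
      (∀ i k, A i k = true → f i < f k) → ∀ x y, x ∉ L → y ∉ L →
      (1 - Wm (L.foldl elimStep (A, c)).1 (L.foldl elimStep (A, c)).2)⁻¹ x y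
        = (1 - Wm A c)⁻¹ x y := by
  intro L
  induction L with
  | nil => intro A c h x y _ _; rfl
  | cons j rest ih =>
    intro A c h x y hx hy
    have hstep : (j :: rest).foldl elimStep (A, c)
        = rest.foldl elimStep (elimAdj A j, elimLab A c j) := rfl
    rw [hstep]
    have hx' : x ≠ j ∧ x ∉ rest := by
      constructor
      · intro hh; exact hx (hh ▸ (List.mem_cons_self : j ∈ j :: rest))
      · intro hh; exact hx (List.mem_cons_of_mem j hh)
    have hy' : y ≠ j ∧ y ∉ rest := by
      constructor
      · intro hh; exact hy (hh ▸ (List.mem_cons_self : j ∈ j :: rest))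
      · intro hh; exact hy (List.mem_cons_of_mem j hh)
    rw [ih (elimAdj A j) (elimLab A c j) (elim_mono f A j h) x y hx'.2 hy'.2]
    exact step_inv f A c h j hx'.1 hy'.1

lemma fold_bip (A₀ : V → V → Bool) :
    ∀ (L : List V) (A : V → V → Bool) (c : V → V → ℝ),
    (∀ x, (∀ u, A₀ u x = false) → ∀ u, A u x = false) →
    (∀ x, (∀ w, A₀ x w = false) → ∀ w, A x w = false) →
    (∀ x y, A x y = true → (∃ u, A₀ x u = true) ∧ (∃ u, A₀ u y = true)) →
    (∀ v, ((∃ i, A₀ i v = true) ∧ (∃ k, A₀ v k = true)) → v ∉ L →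
        (∀ z, A v z = false) ∧ (∀ z, A z v = false)) →
    ((∀ x, (∀ u, A₀ u x = false) → ∀ u, (L.foldl elimStep (A, c)).1 u x = false) ∧
     (∀ x, (∀ w, A₀ x w = false) → ∀ w, (L.foldl elimStep (A, c)).1 x w = false) ∧
     (∀ x y, (L.foldl elimStep (A, c)).1 x y = true →
        (∃ u, A₀ x u = true) ∧ (∃ u, A₀ u y = true)) ∧
     (∀ v, ((∃ i, A₀ i v = true) ∧ (∃ k, A₀ v k = true)) →
        (∀ z, (L.foldl elimStep (A, c)).1 v z = false) ∧
        (∀ z, (L.foldl elimStep (A, c)).1 z v = false))) := by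
  intro L
  induction L with
  | nil =>
    intro A c h1 h2 h3 h4
    exact ⟨h1, h2, h3, fun v hv => h4 v hv (by simp)⟩
  | cons j rest ih =>
    intro A c h1 h2 h3 h4
    have hstep : (j :: rest).foldl elimStep (A, c)
        = rest.foldl elimStep (elimAdj A j, elimLab A c j) := rfl
    rw [hstep]
    apply ih
    · -- sources stay sources
      intro x hx u
      rw [← Bool.not_eq_true, elimAdj_true_iff]
      rintro ⟨-, h5 | ⟨-, h5⟩⟩
      · rw [h1 x hx u] at h5; exact Bool.false_ne_true h5
      · rw [h1 x hx j] at h5; exact Bool.false_ne_true h5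
    · -- sinks stay sinks
      intro x hx w
      rw [← Bool.not_eq_true, elimAdj_true_iff]
      rintro ⟨-, h5 | ⟨h5, -⟩⟩
      · rw [h2 x hx w] at h5; exact Bool.false_ne_true h5
      · rw [h2 x hx j] at h5; exact Bool.false_ne_true h5
    · -- edges have endpoints with original edges
      intro x y hxy
      rw [elimAdj_true_iff] at hxy
      rcases hxy.2 with h5 | ⟨h5, h6⟩
      · exact h3 x y h5
      · exact ⟨(h3 x j h5).1, (h3 j y h6).2⟩
    · -- already-eliminated vertices stay isolated
      intro v hv hvr
      by_cases hvj : v = j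
      · constructor <;> intro z <;> rw [← Bool.not_eq_true, elimAdj_true_iff] <;>
          rintro ⟨⟨ha, hb⟩, -⟩
        · exact ha hvj
        · exact hb hvj
      · have hiso := h4 v hv (by
          intro hmem
          rcases List.mem_cons.mp hmem with h | h
          · exact hvj h
          · exact hvr h)
        constructor
        · intro z
          rw [← Bool.not_eq_true, elimAdj_true_iff]
          rintro ⟨-, h5 | ⟨h5, -⟩⟩
          · rw [hiso.1 z] at h5; exact Bool.false_ne_true h5
          · rw [hiso.1 j] at h5; exact Bool.false_ne_true h5
        · intro z
          rw [← Bool.not_eq_true, elimAdj_true_iff]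
          rintro ⟨-, h5 | ⟨-, h5⟩⟩
          · rw [hiso.2 z] at h5; exact Bool.false_ne_true h5
          · rw [hiso.2 j] at h5; exact Bool.false_ne_true h5

end Dev3

section Dev4
variable {V : Type*} [Fintype V] [DecidableEq V]

def allLists : ℕ → Finset (List V)
  | 0 => {([] : List V)}
  | (n + 1) => Finset.univ.biUnion fun a : V => (allLists n).image (a :: ·)

lemma mem_allLists : ∀ (n : ℕ) (p : List V), p ∈ allLists n ↔ p.length = n
  | 0, p => by cases p <;> simp [allLists]
  | (n + 1), p => by
    cases p with
    | nil => simp [allLists]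
    | cons a q =>
      simp [allLists, mem_allLists n q]

noncomputable def pval (c : V → V → ℝ) (p : List V) : ℝ :=
  ((p.zip p.tail).map (fun e => c e.1 e.2)).prod

lemma pval_pair (c : V → V → ℝ) (a b : V) : pval c [a, b] = c a b := by
  simp [pval]

lemma pval_cons (c : V → V → ℝ) (a b : V) (q : List V) :
    pval c (a :: b :: q) = c a b * pval c (b :: q) := by
  simp [pval]

noncomputable def Pk (A : V → V → Bool) (s t : V) (k : ℕ) : Finset (List V) :=
  (allLists (k + 2)).filter (fun p => IsPath (fun a b => A a b = true) s t p)

lemma mem_Pk {A : V → V → Bool} {s t : V} {k : ℕ} {p : List V} :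
    p ∈ Pk A s t k ↔ p.length = k + 2 ∧ IsPath (fun a b => A a b = true) s t p := by
  simp [Pk, mem_allLists]

lemma Pk_zero (A : V → V → Bool) (s t : V) :
    Pk A s t 0 = if A s t = true then {([s, t] : List V)} else ∅ := by
  ext p
  rw [mem_Pk]
  constructor
  · rintro ⟨hlen, h2, hch, hh, hl⟩
    obtain ⟨a, b, rfl⟩ := List.length_eq_two.mp hlen
    simp at hh hl
    subst hh; subst hl
    have hR : A a b = true := (List.isChain_cons_cons.mp hch).1
    rw [if_pos hR]
    simp
  · intro hp
    by_cases hA : A s t = true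
    · rw [if_pos hA] at hp
      rw [Finset.mem_singleton] at hp
      subst hp
      refine ⟨rfl, by norm_num [IsPath], List.isChain_cons_cons.mpr ⟨hA, List.isChain_singleton _⟩, rfl, ?_⟩ <;> simp [hA, List.isChain_cons_cons]
    · rw [if_neg hA] at hp
      exact absurd hp (Finset.notMem_empty p)

end Dev4

section Dev5
variable {V : Type*} [Fintype V] [DecidableEq V]

lemma mem_Pk_cons {A : V → V → Bool} {z t : V} {k : ℕ} {p : List V} (hp : p ∈ Pk A z t k) :
    ∃ q, p = z :: q ∧ q.length = k + 1 := by
  obtain ⟨hlen, -, -, hh, -⟩ := mem_Pk.mp hp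
  cases p with
  | nil => simp at hlen
  | cons a q =>
    simp at hh hlen
    exact ⟨q, by rw [hh], by omega⟩

lemma Pk_succ (A : V → V → Bool) (s t : V) (k : ℕ) :
    Pk A s t (k + 1) = Finset.univ.biUnion
      (fun z => if A s z = true then (Pk A z t k).image (s :: ·) else ∅) := by
  ext p
  simp only [Finset.mem_biUnion, Finset.mem_univ, true_and]
  constructor
  · intro hp
    obtain ⟨hlen, -, hch, hh, hl⟩ := mem_Pk.mp hp
    cases p with
    | nil => simp at hlen
    | cons a q =>
      simp only [List.head?_cons, Option.some_inj] at hh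
      subst hh
      cases q with
      | nil => simp at hlen
      | cons z r =>
        have hch' := List.isChain_cons_cons.mp hch
        refine ⟨z, ?_⟩
        rw [if_pos hch'.1]
        rw [Finset.mem_image]
        refine ⟨z :: r, ?_, rfl⟩
        rw [mem_Pk]
        have hlen' : (z :: r).length = k + 2 := by simp at hlen ⊢; omega
        refine ⟨hlen', by omega, hch'.2, rfl, ?_⟩
        rw [← hl]
        exact List.getLast?_cons_cons.symm
  · rintro ⟨z, hz⟩
    by_cases hA : A s z = true
    · rw [if_pos hA, Finset.mem_image] at hz
      obtain ⟨q, hq, rfl⟩ := hz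
      obtain ⟨hqlen, -, hqch, hqh, hql⟩ := mem_Pk.mp hq
      obtain ⟨r, rfl, -⟩ := mem_Pk_cons hq
      rw [mem_Pk]
      have hqlen' : (s :: z :: r).length = k + 1 + 2 := by simp at hqlen ⊢; omega
      refine ⟨hqlen', by omega, ?_, rfl, ?_⟩
      · exact List.isChain_cons_cons.mpr ⟨hA, hqch⟩
      · rw [← hql]
        exact List.getLast?_cons_cons
    · rw [if_neg hA] at hz
      exact absurd hz (Finset.notMem_empty _)

lemma pow_eq_Pk_sum (A : V → V → Bool) (c : V → V → ℝ) :
    ∀ (k : ℕ) (s t : V), ((Wm A c) ^ (k + 1)) s t = ∑ p ∈ Pk A s t k, pval c p := by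
  intro k
  induction k with
  | zero =>
    intro s t
    rw [pow_one, Pk_zero]
    by_cases hA : A s t = true
    · rw [if_pos hA, Finset.sum_singleton, pval_pair, Wm_apply, if_pos hA]
    · rw [if_neg hA, Finset.sum_empty, Wm_apply, if_neg hA]
  | succ k ih =>
    intro s t
    rw [pow_succ', Matrix.mul_apply, Pk_succ]
    rw [Finset.sum_biUnion]
    · apply Finset.sum_congr rfl
      intro z _
      by_cases hA : A s z = true
      · rw [if_pos hA, Finset.sum_image (by intro a _ b _ h; simpa using h)]
        rw [ih z t, Finset.mul_sum]
        apply Finset.sum_congr rfl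
        intro q hq
        obtain ⟨r, rfl, -⟩ := mem_Pk_cons hq
        rw [pval_cons, Wm_apply, if_pos hA]
      · rw [if_neg hA, Finset.sum_empty, Wm_apply, if_neg hA, zero_mul]
    · intro z1 _ z2 _ hne
      simp only [Function.onFun]
      rw [Finset.disjoint_left]
      intro p hp1 hp2
      have key : ∀ z, p ∈ (if A s z = true then (Pk A z t k).image (s :: ·) else ∅) →
          p.tail.head? = some z := by
        intro z hz
        by_cases h : A s z = true
        · rw [if_pos h, Finset.mem_image] at hz
          obtain ⟨q, hq, rfl⟩ := hz
          obtain ⟨r, rfl, -⟩ := mem_Pk_cons hq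
          rfl
        · rw [if_neg h] at hz; exact absurd hz (Finset.notMem_empty _)
      have k1 := key z1 hp1
      have k2 := key z2 hp2
      rw [k1] at k2
      exact hne (Option.some_inj.mp k2)
end Dev5

section Dev6
variable {V : Type*} [Fintype V] [DecidableEq V]

lemma chain_f_bound (f : V → ℕ) (A : V → V → Bool) (h : ∀ i k, A i k = true → f i < f k) :
    ∀ (p : List V), p.Chain' (fun a b => A a b = true) →
      ∀ x, p.head? = some x → ∀ y, p.getLast? = some y → f x + p.length ≤ f y + 1 := by
  intro p
  induction p with
  | nil => intro _ x hx; simp at hx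
  | cons a q ih =>
    intro hc x hx y hy
    simp only [List.head?_cons, Option.some_inj] at hx
    subst hx
    cases q with
    | nil =>
      simp at hy
      subst hy
      simp
    | cons b r =>
      have hc' := List.isChain_cons_cons.mp hc
      have hy' : (b :: r).getLast? = some y := by
        rw [← hy]; exact List.getLast?_cons_cons.symm
      have hih := ih hc'.2 b rfl y hy'
      have hab := h a b hc'.1
      simp only [List.length_cons] at hih ⊢
      omega

lemma pathSum_eq (f : V → ℕ) (A : V → V → Bool) (c : V → V → ℝ)
    (h : ∀ i k, A i k = true → f i < f k) (s t : V) :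
    pathSum (fun a b => A a b = true) c s t
      = ∑ k ∈ Finset.range (Finset.univ.sup f + 1), ((Wm A c) ^ (k + 1)) s t := by
  set N := Finset.univ.sup f + 1 with hN
  set Pall : Finset (List V) := (Finset.range N).biUnion (fun k => Pk A s t k) with hPall
  have hiff : ∀ p : List V, IsPath (fun a b => A a b = true) s t p ↔ p ∈ Pall := by
    intro p
    constructor
    · intro hp
      obtain ⟨hlen, hch, hh, hl⟩ := hp
      have hbound := chain_f_bound f A h p hch s hh t hl
      have hts : f t ≤ Finset.univ.sup f := Finset.le_sup (Finset.mem_univ t)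
      rw [hPall, Finset.mem_biUnion]
      refine ⟨p.length - 2, Finset.mem_range.mpr (by omega), ?_⟩
      rw [mem_Pk]
      exact ⟨by omega, hlen, hch, hh, hl⟩
    · intro hp
      rw [hPall, Finset.mem_biUnion] at hp
      obtain ⟨k, -, hk⟩ := hp
      exact (mem_Pk.mp hk).2
  have h1 : pathSum (fun a b => A a b = true) c s t = ∑' p : {p : List V // p ∈ Pall}, pval c p.1 := by
    rw [pathSum]
    exact Equiv.tsum_eq (Equiv.subtypeEquivRight hiff) (fun p => pval c p.1)
  rw [h1, Finset.tsum_subtype Pall (fun p => pval c p)]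
  rw [hPall, Finset.sum_biUnion]
  · apply Finset.sum_congr rfl
    intro k _
    exact (pow_eq_Pk_sum A c k s t).symm
  · intro k1 _ k2 _ hne
    simp only [Function.onFun]
    rw [Finset.disjoint_left]
    intro p hp1 hp2
    have l1 := (mem_Pk.mp hp1).1
    have l2 := (mem_Pk.mp hp2).1
    omega

end Dev6

section Final
variable {V : Type*} [Fintype V] [DecidableEq V]

lemma row_zero_pow (M : Matrix V V ℝ) (z : V) (hz : ∀ w, M z w = 0) :
    ∀ (m : ℕ) (t : V), (M ^ (m + 1)) z t = 0 := by
  intro m t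
  rw [pow_succ', Matrix.mul_apply]
  apply Finset.sum_eq_zero
  intro w _
  rw [hz w, zero_mul]

end Final

/-- **Complete vertex elimination yields the bipartite Jacobian dag.**
Eliminating all intermediate vertices of an edge-labeled dag `G` one after another, in
an arbitrary order (`L` is any duplicate-free enumeration of the intermediate
vertices, and each elimination is applied to the current graph via the fold), yields a
graph `G'` in which every edge goes from a source of `G` to a sink of `G`, and for
every source `s` and sink `t` the label of the edge `(s,t)` in `G'` (taken to be `0`
if absent) equals the original path sum `J_G(s,t)`. -/
theorem complete_vertex_elimination_bipartite
    {V : Type*} [Fintype V] [DecidableEq V]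
    (A : V → V → Bool) (c : V → V → ℝ)
    (f : V → ℕ) (hacyc : ∀ i j, A i j = true → f i < f j)
    (L : List V) (hnd : L.Nodup)
    (hmem : ∀ j, j ∈ L ↔ ((∃ i, A i j = true) ∧ (∃ k, A j k = true)))
    (G' : (V → V → Bool) × (V → V → ℝ))
    (hG' : G' = L.foldl (fun p j => (elimAdj p.1 j, elimLab p.1 p.2 j)) (A, c)) :
    (∀ x y, G'.1 x y = true → (∀ u, A u x = false) ∧ (∀ w, A y w = false)) ∧
    (∀ s t, (∀ u, A u s = false) → (∀ w, A t w = false) →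
      (if G'.1 s t then G'.2 s t else 0) = pathSum (fun a b => A a b = true) c s t) := by
  classical
  have hfold : G' = L.foldl elimStep (A, c) := hG'
  set N : ℕ := Finset.univ.sup f + 1 with hN
  -- bipartite structure
  obtain ⟨hsrc, hsnk, hex, hiso⟩ :=
    fold_bip A L A c (fun x hx u => hx u) (fun x hx w => hx w)
      (fun x y hxy => ⟨⟨y, hxy⟩, ⟨x, hxy⟩⟩)
      (fun v hv hvL => absurd ((hmem v).mpr hv) hvL)
  rw [← hfold] at hsrc hsnk hex hiso
  have part1 : ∀ x y, G'.1 x y = true → (∀ u, A u x = false) ∧ (∀ w, A y w = false) := by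
    intro x y hxy
    obtain ⟨⟨u1, hu1⟩, ⟨u2, hu2⟩⟩ := hex x y hxy
    constructor
    · intro u
      cases hux : A u x with
      | false => rfl
      | true =>
        exfalso
        have hint : (∃ i, A i x = true) ∧ (∃ k, A x k = true) := ⟨⟨u, hux⟩, ⟨u1, hu1⟩⟩
        have hzero := (hiso x hint).1 y
        rw [hzero] at hxy
        exact Bool.false_ne_true hxy
    · intro w
      cases hyw : A y w with
      | false => rfl
      | true =>
        exfalso
        have hint : (∃ i, A i y = true) ∧ (∃ k, A y k = true) := ⟨⟨u2, hu2⟩, ⟨w, hyw⟩⟩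
        have hzero := (hiso y hint).2 x
        rw [hzero] at hxy
        exact Bool.false_ne_true hxy
  refine ⟨part1, ?_⟩
  intro s t hs ht
  have hsL : s ∉ L := by
    intro hmem'
    obtain ⟨⟨i, hi⟩, -⟩ := (hmem s).mp hmem'
    rw [hs i] at hi
    exact Bool.false_ne_true hi
  have htL : t ∉ L := by
    intro hmem'
    obtain ⟨-, ⟨k, hk⟩⟩ := (hmem t).mp hmem'
    rw [ht k] at hk
    exact Bool.false_ne_true hk
  have hmono1 : ∀ i k, G'.1 i k = true → f i < f k := by
    rw [hfold]
    exact fold_mono f L A c hacyc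
  set W0 : Matrix V V ℝ := Wm A c with hW0
  set W1 : Matrix V V ℝ := Wm G'.1 G'.2 with hW1
  have hvan : ∀ (B : V → V → Bool) (d : V → V → ℝ),
      (∀ i k, B i k = true → f i < f k) → (Wm B d) ^ (N + 1) = 0 := by
    intro B d hB
    have h1 : (Wm B d) ^ N = 0 := by
      apply pow_vanish f
      · intro i k hik
        exact hB i k (Wm_entry hik)
      · intro z
        have : f z ≤ Finset.univ.sup f := Finset.le_sup (Finset.mem_univ z)
        omega
    rw [pow_succ, h1, zero_mul]
  have hjac0 := fold_jac f L A c hacyc s t hsL htL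
  rw [← hfold] at hjac0
  have hi1 : (1 - W1)⁻¹ = ∑ k ∈ Finset.range (N + 1), W1 ^ k :=
    Matrix.inv_eq_right_inv (inv_one_sub _ (N + 1) (hvan G'.1 G'.2 hmono1))
  have hi0 : (1 - W0)⁻¹ = ∑ k ∈ Finset.range (N + 1), W0 ^ k :=
    Matrix.inv_eq_right_inv (inv_one_sub _ (N + 1) (hvan A c hacyc))
  rw [hi0, hi1] at hjac0
  have hsplit : ∀ W : Matrix V V ℝ,
      ∑ k ∈ Finset.range (N + 1), W ^ k = (∑ k ∈ Finset.range N, W ^ (k + 1)) + 1 := by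
    intro W
    have := Finset.sum_range_succ' (fun k => W ^ k) N
    rw [pow_zero] at this
    exact this
  rw [hsplit, hsplit] at hjac0
  have hkey : (∑ k ∈ Finset.range N, W1 ^ (k + 1)) s t
      = (∑ k ∈ Finset.range N, W0 ^ (k + 1)) s t := by
    have h2 := hjac0
    rw [Matrix.add_apply, Matrix.add_apply] at h2
    exact add_right_cancel h2
  have hRHS : (∑ k ∈ Finset.range N, W0 ^ (k + 1)) s t
      = pathSum (fun a b => A a b = true) c s t := by
    rw [pathSum_eq f A c hacyc s t, Matrix.sum_apply]
  have hLHS : (∑ k ∈ Finset.range N, W1 ^ (k + 1)) s t = W1 s t := by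
    rw [Matrix.sum_apply]
    rw [Finset.sum_eq_single_of_mem 0 (Finset.mem_range.mpr (by omega))]
    · rw [pow_one]
    · intro k _ hk0
      obtain ⟨m, rfl⟩ : ∃ m, k = m + 1 := ⟨k - 1, by omega⟩
      rw [pow_succ', Matrix.mul_apply]
      apply Finset.sum_eq_zero
      intro z _
      by_cases hz : G'.1 s z = true
      · have hzsink : ∀ w, A z w = false := (part1 s z hz).2
        have hzrow : ∀ w, G'.1 z w = false := hsnk z hzsink
        have : (W1 ^ (m + 1)) z t = 0 := by
          apply row_zero_pow
          intro w
          rw [hW1, Wm_apply, hzrow w]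
          simp
        rw [this, mul_zero]
      · have : W1 s z = 0 := by
          rw [hW1, Wm_apply]
          rw [Bool.not_eq_true] at hz
          rw [hz]
          simp
        rw [this, zero_mul]
  have : W1 s t = pathSum (fun a b => A a b = true) c s t := by
    rw [← hLHS, hkey, hRHS]
  rw [← this, hW1, Wm_apply]
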